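/- For the zigzag Dyck path Z_{n+1} = (NE)^{n+1} of size n+1, the number of billiard trajectories in the grid polygon enclosed by Z_{n+1} and the reflection of L_{n+1} = N^{n+1}E^{n+1} equals 1 + ⌊n/2⌋. -/

import Mathlib

/-- A Dyck path of size `n`: a list of booleans (`true` = north step, `false` = east step)
from `(0,0)` to `(n,n)` staying weakly above the diagonal `y = x`. -/
def IsDyckPath (n : ℕ) (w : List Bool) : Prop :=
  w.length = 2 * n ∧ w.count true = n ∧
    ∀ k, (w.take k).count false ≤ (w.take k).count true

/-- The `y`-coordinate of the lattice point reached after `k` steps. -/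
def ycoord (w : List Bool) (k : ℕ) : ℕ := (w.take k).count true

/-- The `x`-coordinate of the lattice point reached after `k` steps. -/
def xcoord (w : List Bool) (k : ℕ) : ℕ := (w.take k).count false

/-- A peak: a north step at position `i` followed by an east step. -/
def IsPeak (w : List Bool) (i : ℕ) : Prop := w[i]? = some true ∧ w[i+1]? = some false

/-- A valley: an east step at position `i` followed by a north step. -/
def IsValley (w : List Bool) (i : ℕ) : Prop := w[i]? = some false ∧ w[i+1]? = some true

/-- Height above the diagonal after `k` steps. -/
def pdepth (w : List Bool) (k : ℕ) : ℤ := (ycoord w k : ℤ) - (xcoord w k : ℤ)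

/-- Step `i` (a north step) of `w` is matched with step `j` (an east step):
the facing east step at the same height (balanced-parentheses matching). -/
def Matches (w : List Bool) (i j : ℕ) : Prop :=
  i < j ∧ w[i]? = some true ∧ w[j]? = some false ∧
    pdepth w (j + 1) = pdepth w i ∧ ∀ k, i < k → k ≤ j → pdepth w i < pdepth w k

/-- The graph on `m` points whose edges are the upper arches and the lower arches;
its connected components are the components of the corresponding meander. -/
def meanderGraph (m : ℕ) (upper lower : ℕ → ℕ → Prop) : SimpleGraph (Fin m) where
  Adj i j := i ≠ j ∧ (upper i.1 j.1 ∨ upper j.1 i.1 ∨ lower i.1 j.1 ∨ lower j.1 i.1)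
  symm := by
    constructor
    intro i j h
    exact ⟨h.1.symm, by tauto⟩
  loopless := by
    constructor
    intro i h
    exact h.1 rfl

/-- The number of components of the meander with the matching of `P` above and the
matching of `Q` below. -/
noncomputable def trajPQ (n : ℕ) (P Q : List Bool) : ℕ :=
  Nat.card (meanderGraph (2 * n) (Matches P) (Matches Q)).ConnectedComponent

/-- The number of components of the meander with the matching of `P` above and the
rainbow matching `i ↦ 2n - 1 - i` below. -/
noncomputable def traj (n : ℕ) (P : List Bool) : ℕ :=
  Nat.card (meanderGraph (2 * n) (Matches P)
    (fun i j => i + j + 1 = 2 * n)).ConnectedComponent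

/-- No peak with even `y`-coordinate and no valley with odd `x`-coordinate. -/
def NoBadCorner (w : List Bool) : Prop :=
  (∀ i, IsPeak w i → Odd (ycoord w (i + 1))) ∧
  (∀ i, IsValley w i → Even (xcoord w (i + 1)))

/-- A bad corner: a peak with even `y`-coordinate or a valley with odd `x`-coordinate. -/
def IsBadCorner (w : List Bool) (i : ℕ) : Prop :=
  (IsPeak w i ∧ Even (ycoord w (i + 1))) ∨ (IsValley w i ∧ Odd (xcoord w (i + 1)))

/-- Interchange the two steps of the corner at positions `i`, `i+1`. -/
def swapCorner (w : List Bool) (i : ℕ) : List Bool :=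
  (w.set i (w.getD (i + 1) true)).set (i + 1) (w.getD i true)

open Classical in
/-- The involution `φ`: swap the two steps of the first bad corner, if any. -/
noncomputable def phiMap (w : List Bool) : List Bool :=
  if h : ∃ i, IsBadCorner w i then swapCorner w (Nat.find h) else w

/-- The number of unit squares between a Dyck path and the diagonal `y = x`. -/
def area (w : List Bool) : ℕ :=
  ((List.range w.length).map fun i =>
    if w.getD i true then 0 else ycoord w i - xcoord w i - 1).sum

/-- The zigzag Dyck path `(NE)^m`. -/
def zigzag (m : ℕ) : List Bool := (List.replicate m [true, false]).flatten

/-- `N^{2a_1} E^{2b_1} ⋯ N^{2a_t} E^{2b_t}` for `ab = [(a_1,b_1),…,(a_t,b_t)]`. -/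
def doubledWord (ab : List (ℕ × ℕ)) : List Bool :=
  (ab.map fun p => List.replicate (2 * p.1) true ++ List.replicate (2 * p.2) false).flatten

/-- `N^{a_1} E^{b_1} ⋯ N^{a_t} E^{b_t}` for `ab = [(a_1,b_1),…,(a_t,b_t)]`. -/
def halfWord (ab : List (ℕ × ℕ)) : List Bool :=
  (ab.map fun p => List.replicate p.1 true ++ List.replicate p.2 false).flatten

/-- All peaks at odd height (`height` = `y - x` at the peak's lattice point). -/
def AllPeaksOdd (w : List Bool) : Prop :=
  ∀ i, IsPeak w i → Odd (ycoord w (i + 1) - xcoord w (i + 1))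

/-- All peaks at even height. -/
def AllPeaksEven (w : List Bool) : Prop :=
  ∀ i, IsPeak w i → Even (ycoord w (i + 1) - xcoord w (i + 1))

/-- Steps of a Motzkin path: up, horizontal, down. -/
inductive MStep | U | H | D
deriving DecidableEq

/-- The total height change along a list of Motzkin steps. -/
def msum (l : List MStep) : ℤ :=
  (l.map fun s => match s with | MStep.U => 1 | MStep.H => 0 | MStep.D => -1).sum

/-- A Motzkin path of length `n`. -/
def IsMotzkin (n : ℕ) (l : List MStep) : Prop :=
  l.length = n ∧ msum l = 0 ∧ ∀ k, 0 ≤ msum (l.take k)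

/-- A Riordan path of length `n`: a Motzkin path with no horizontal step on the `x`-axis. -/
def IsRiordan (n : ℕ) (l : List MStep) : Prop :=
  IsMotzkin n l ∧ ∀ i, l[i]? = some MStep.H → msum (l.take i) ≠ 0

/-- The map `φ_A` from Dyck paths of size `n+1` (all peaks at odd height)
to Motzkin paths of length `n`: `v_j` is read off from steps `p_{2j} p_{2j+1}`. -/
def phiA (n : ℕ) (P : List Bool) : List MStep :=
  (List.range n).map fun j =>
    match P.getD (2 * j + 1) true, P.getD (2 * j + 2) true with
    | true, true => MStep.U
    | false, true => MStep.H
    | _, _ => MStep.D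

/-- The map `φ_B` from Dyck paths of size `n` (all peaks at even height)
to Riordan paths of length `n`: `u_j` is read off from steps `p_{2j-1} p_{2j}`. -/
def phiB (n : ℕ) (P : List Bool) : List MStep :=
  (List.range n).map fun j =>
    match P.getD (2 * j) true, P.getD (2 * j + 1) true with
    | true, true => MStep.U
    | false, true => MStep.H
    | _, _ => MStep.D
lemma zigzag_succ (m : ℕ) : zigzag (m+1) = true :: false :: zigzag m := by
  simp [zigzag, List.replicate_succ]

lemma getElem?_zigzag (m i : ℕ) :
    (zigzag m)[i]? = if i < 2*m then some (decide (i % 2 = 0)) else none := by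
  induction m generalizing i with
  | zero => simp [zigzag]
  | succ m ih =>
    rw [zigzag_succ]
    match i with
    | 0 => simp
    | 1 => simp; omega
    | (k+2) =>
      simp only [List.getElem?_cons_succ, ih k]
      split <;> split
      all_goals first | rfl | omega | (simp only [Option.some.injEq, decide_eq_decide]; omega)

lemma ycoord_zigzag (m k : ℕ) : ycoord (zigzag m) k = min ((k+1)/2) m := by
  induction m generalizing k with
  | zero => simp [zigzag, ycoord]
  | succ m ih =>
    rw [zigzag_succ]
    match k with
    | 0 => simp [ycoord]
    | 1 => simp [ycoord]
    | (k+2) =>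
      have := ih k
      unfold ycoord at this ⊢
      rw [List.take_succ_cons, List.take_succ_cons]
      simp [List.count_cons, this]
      omega

lemma xcoord_zigzag (m k : ℕ) : xcoord (zigzag m) k = min (k/2) m := by
  induction m generalizing k with
  | zero => simp [zigzag, xcoord]
  | succ m ih =>
    rw [zigzag_succ]
    match k with
    | 0 => simp [xcoord]
    | 1 => simp [xcoord]
    | (k+2) =>
      have := ih k
      unfold xcoord at this ⊢
      rw [List.take_succ_cons, List.take_succ_cons]
      simp [List.count_cons, this]

lemma pdepth_zigzag (m k : ℕ) :
    pdepth (zigzag m) k = ((min k (2*m)) % 2 : ℕ) := by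
  unfold pdepth
  rw [ycoord_zigzag, xcoord_zigzag]
  omega

lemma matches_zigzag (m i j : ℕ) :
    Matches (zigzag m) i j ↔ i % 2 = 0 ∧ j = i + 1 ∧ j < 2*m := by
  constructor
  · rintro ⟨hij, hi, hj, hd, hmin⟩
    rw [getElem?_zigzag] at hi hj
    split at hi <;> simp_all
    by_contra hne
    have h2 := hmin (i+2) (by omega) (by omega)
    rw [pdepth_zigzag, pdepth_zigzag] at h2
    omega
  · rintro ⟨h1, rfl, h3⟩
    refine ⟨by omega, ?_, ?_, ?_, ?_⟩
    · rw [getElem?_zigzag]; simp; omega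
    · rw [getElem?_zigzag]; simp; omega
    · rw [pdepth_zigzag, pdepth_zigzag]; omega
    · intro k hk1 hk2
      have : k = i + 1 := by omega
      subst this
      rw [pdepth_zigzag, pdepth_zigzag]
      omega

/-- For the zigzag Dyck path `Z_{n+1} = (NE)^{n+1}`, the number of billiard trajectories in
the grid polygon of `(Z_{n+1}, L_{n+1})` equals `1 + ⌊n/2⌋`. -/
theorem traj_zigzag (n : ℕ) : traj (n + 1) (zigzag (n + 1)) = 1 + n / 2 := by
  set m := n + 1 with hm
  unfold traj
  set G := meanderGraph (2 * m) (Matches (zigzag m)) (fun i j => i + j + 1 = 2 * m) with hG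
  have hadj : ∀ i j : Fin (2*m), G.Adj i j ↔ i ≠ j ∧
      ((i.1 % 2 = 0 ∧ j.1 = i.1 + 1 ∧ j.1 < 2*m) ∨
       (j.1 % 2 = 0 ∧ i.1 = j.1 + 1 ∧ i.1 < 2*m) ∨
       i.1 + j.1 + 1 = 2 * m) := by
    intro i j
    show (i ≠ j ∧ _) ↔ _
    rw [matches_zigzag, matches_zigzag]
    constructor
    · rintro ⟨h1, h | h | h | h⟩
      exacts [⟨h1, Or.inl h⟩, ⟨h1, Or.inr (Or.inl h)⟩, ⟨h1, Or.inr (Or.inr h)⟩,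
        ⟨h1, Or.inr (Or.inr (by omega))⟩]
    · rintro ⟨h1, h | h | h⟩
      exacts [⟨h1, Or.inl h⟩, ⟨h1, Or.inr (Or.inl h)⟩, ⟨h1, Or.inr (Or.inr (Or.inl h))⟩]
  have hfb : ∀ i : Fin (2*m), min (i.1/2) (m - 1 - i.1/2) < n/2 + 1 := by
    intro i; have := i.2; omega
  set f : Fin (2*m) → Fin (n/2+1) := fun i => ⟨min (i.1/2) (m - 1 - i.1/2), hfb i⟩ with hf
  have hpres : ∀ i j : Fin (2*m), G.Adj i j → f i = f j := by
    intro i j h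
    rw [hadj] at h
    have hi := i.2; have hj := j.2
    apply Fin.ext
    show min (i.1/2) (m - 1 - i.1/2) = min (j.1/2) (m - 1 - j.1/2)
    rcases h.2 with h | h | h <;> omega
  have edgeM : ∀ (i j : Fin (2*m)), i.1 % 2 = 0 → j.1 = i.1 + 1 → G.Adj i j := by
    intro i j h1 h2
    rw [hadj]
    exact ⟨fun hc => by subst hc; omega, Or.inl ⟨h1, h2, j.2⟩⟩
  have edgeR : ∀ (i j : Fin (2*m)), i.1 + j.1 + 1 = 2*m → i ≠ j → G.Adj i j := by
    intro i j h hne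
    rw [hadj]
    exact ⟨hne, Or.inr (Or.inr h)⟩
  have reach : ∀ i : Fin (2*m), G.Reachable i ⟨2 * (f i).1, by have := hfb i; omega⟩ := by
    intro i
    have hi2 := i.2
    set a := i.1 / 2 with ha
    have h2a1 : 2*a+1 < 2*m := by omega
    have hia : i.1 = 2*a ∨ i.1 = 2*a+1 := by omega
    have step1 : G.Reachable i ⟨2*a+1, h2a1⟩ := by
      rcases hia with h | h
      · exact (edgeM i ⟨2*a+1, h2a1⟩ (by omega) (by show 2*a+1 = i.1+1; omega)).reachable
      · exact SimpleGraph.Reachable.refl _ |>.mono le_rfl |>.symm.symm |>.trans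
          (by rw [show i = (⟨2*a+1, h2a1⟩ : Fin (2*m)) from Fin.ext h])
    by_cases hc : a ≤ m - 1 - a
    · have hfi : (f i).1 = a := by show min (i.1/2) (m - 1 - i.1/2) = a; omega
      have h1 : G.Adj (⟨2*a, by omega⟩ : Fin (2*m)) ⟨2*a+1, h2a1⟩ :=
        edgeM _ _ (Nat.mul_mod_right 2 a) rfl
      have : G.Reachable i ⟨2*a, by omega⟩ := step1.trans h1.reachable.symm
      convert this using 2
      omega
    · have hfi : (f i).1 = m - 1 - a := by show min (i.1/2) (m - 1 - i.1/2) = m - 1 - a; omega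
      have h1 : G.Adj (⟨2*a+1, h2a1⟩ : Fin (2*m)) ⟨2*(m-1-a), by omega⟩ :=
        edgeR _ _ (show 2*a+1 + 2*(m-1-a) + 1 = 2*m by omega)
          (Fin.ne_of_val_ne (show 2*a+1 ≠ 2*(m-1-a) by omega))
      have : G.Reachable i ⟨2*(m-1-a), by omega⟩ := step1.trans h1.reachable
      convert this using 2
      omega
  have key : ∀ i j : Fin (2*m), f i = f j → G.Reachable i j := by
    intro i j hfij
    have r1 := reach i
    have r2 := reach j
    simp only [hfij] at r1
    exact r1.trans r2.symm
  have hwalk : ∀ (v w : Fin (2*m)) (p : G.Walk v w), p.IsPath → f v = f w := by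
    intro v w p _
    induction p with
    | nil => rfl
    | cons h p ih => exact (hpres _ _ h).trans (ih (by
        exact (SimpleGraph.Walk.IsPath.of_cons ‹_›)))
  have hbij : Function.Bijective (SimpleGraph.ConnectedComponent.lift f hwalk) := by
    constructor
    · intro c d hcd
      obtain ⟨i, rfl⟩ := c.exists_rep
      obtain ⟨j, rfl⟩ := d.exists_rep
      exact SimpleGraph.ConnectedComponent.sound (key i j hcd)
    · intro k
      have h2k : 2 * k.1 < 2*m := by have := k.2; omega
      refine ⟨G.connectedComponentMk ⟨2*k.1, h2k⟩, ?_⟩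
      apply Fin.ext
      show min ((2*k.1)/2) (m - 1 - (2*k.1)/2) = k.1
      have := k.2; omega
  have := Nat.card_eq_of_bijective _ hbij
  rw [this, Nat.card_eq_fintype_card, Fintype.card_fin]
  omega
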